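/- Let Φ_p(x,y) = |p(x+iy)|² for a complex polynomial p with real coefficients of degree k. Then Φ_p(x,y) = Σ_{i=0}^{k} P_i(x)·y^{2i}/(2i)!, where P_i(x) = Σ_{j=0}^{2i} (−1)^{i+j} C(2i,j) p^{(j)}(x) p^{(2i−j)}(x). -/

import Mathlib

open Polynomial Complex

-- pairing even/odd
lemma sum_range_even_odd {M : Type*} [AddCommMonoid M] (f : ℕ → M) (n : ℕ) :
    ∑ s ∈ Finset.range (2*n), f s = ∑ i ∈ Finset.range n, (f (2*i) + f (2*i+1)) := by
  induction n with
  | zero => simp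
  | succ n ih =>
      have h : 2*(n+1) = 2*n+1+1 := by ring
      rw [h, Finset.sum_range_succ, Finset.sum_range_succ, ih, Finset.sum_range_succ,
        add_assoc]

-- odd sums vanish
lemma odd_sum_vanish (c : ℕ → ℂ) {s : ℕ} (hs : Odd s) :
    ∑ j ∈ Finset.range (s+1), c j * ((-1)^(s-j) * c (s-j)) = 0 := by
  have hrefl := Finset.sum_range_reflect (fun j => c j * ((-1:ℂ)^(s-j) * c (s-j))) (s+1)
  have key : (∑ j ∈ Finset.range (s+1), c j * ((-1:ℂ)^(s-j) * c (s-j)))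
      + (∑ j ∈ Finset.range (s+1), c j * ((-1:ℂ)^(s-j) * c (s-j))) = 0 := by
    nth_rewrite 1 [← hrefl]
    rw [← Finset.sum_add_distrib]
    apply Finset.sum_eq_zero
    intro j hj
    have hj' : j ≤ s := by simpa [Nat.lt_succ_iff] using hj
    have h1 : s + 1 - 1 - j = s - j := by omega
    have h2 : s - (s - j) = j := by omega
    rw [h1, h2]
    have hsign : ((-1:ℂ))^j + ((-1:ℂ))^(s-j) = 0 := by
      rcases Nat.even_or_odd j with he | ho
      · have : Odd (s - j) := Nat.Odd.sub_even hj' hs he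
        rw [he.neg_one_pow, this.neg_one_pow]; ring
      · have : Even (s - j) := Nat.Odd.sub_odd hs ho
        rw [ho.neg_one_pow, this.neg_one_pow]; ring
    calc c (s-j) * ((-1:ℂ)^j * c j) + c j * ((-1:ℂ)^(s-j) * c (s-j))
        = c j * c (s-j) * (((-1:ℂ))^j + ((-1:ℂ))^(s-j)) := by ring
      _ = 0 := by rw [hsign]; ring
  linear_combination key / 2

lemma taylor_coeff_eval (p : ℝ[X]) (x : ℝ) (n : ℕ) :
    (taylor (x:ℂ) (p.map (algebraMap ℝ ℂ))).coeff n
      = ((Polynomial.eval x (derivative^[n] p) : ℝ) : ℂ) / (n.factorial : ℂ) := by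
  set q := p.map (algebraMap ℝ ℂ)
  rw [taylor_coeff]
  have h1 : ((n.factorial : ℂ[X])) * (hasseDeriv n q) = derivative^[n] q := by
    have := congrFun (factorial_smul_hasseDeriv (R := ℂ) (k := n)) q
    simpa using this
  have h2 : derivative^[n] q = (derivative^[n] p).map (algebraMap ℝ ℂ) := by
    simp [q, Polynomial.iterate_derivative_map]
  have h3 : ((derivative^[n] p).map (algebraMap ℝ ℂ)).eval ((algebraMap ℝ ℂ) x)
      = algebraMap ℝ ℂ ((derivative^[n] p).eval x) := by
    rw [Polynomial.eval_map, Polynomial.eval₂_at_apply]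
  have h4 : (n.factorial : ℂ) * (hasseDeriv n q).eval (x:ℂ)
      = ((Polynomial.eval x (derivative^[n] p) : ℝ) : ℂ) := by
    have h5 := congrArg (Polynomial.eval (x:ℂ)) h1
    rw [h2] at h5
    simpa [Complex.coe_algebraMap] using h5.trans h3
  have hn : (n.factorial : ℂ) ≠ 0 := Nat.cast_ne_zero.mpr n.factorial_ne_zero
  field_simp [← h4]
  linear_combination h4


/-- Jensen's expansion: for a real polynomial `p` of degree `k`,
`|p(x+iy)|² = ∑_{i=0}^{k} Pᵢ(x) y^{2i}/(2i)!` where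
`Pᵢ(x) = ∑_{j=0}^{2i} (-1)^{i+j} C(2i,j) p^{(j)}(x) p^{(2i-j)}(x)`. -/
theorem jensen_expansion (p : ℝ[X]) (k : ℕ) (hdeg : p.natDegree = k) :
    ∀ x y : ℝ,
      (‖Polynomial.aeval (x + y * Complex.I) p‖)^2
        = ∑ i ∈ Finset.range (k + 1),
            (∑ j ∈ Finset.range (2 * i + 1),
              (-1 : ℝ)^(i + j) * (Nat.choose (2 * i) j : ℝ)
                * Polynomial.eval x (derivative^[j] p)
                * Polynomial.eval x (derivative^[2 * i - j] p))
            * y^(2 * i) / (Nat.factorial (2 * i) : ℝ) := by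
  intro x y
  set a : ℕ → ℝ := fun n => Polynomial.eval x (derivative^[n] p) with ha
  set c : ℕ → ℂ := fun n => ((a n : ℝ) : ℂ) / (n.factorial : ℂ) with hcdef
  have hc0 : ∀ n, k < n → c n = 0 := by
    intro n hn
    have : derivative^[n] p = 0 := Polynomial.iterate_derivative_eq_zero (by omega)
    simp [hcdef, ha, this]
  set q : ℂ[X] := p.map (algebraMap ℝ ℂ) with hq
  set z : ℂ := Polynomial.aeval ((x:ℂ) + (y:ℂ) * Complex.I) p with hzdef
  -- Taylor expansion of z
  have hqdeg : q.natDegree < k + 1 := by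
    have h : q.natDegree ≤ p.natDegree := Polynomial.natDegree_map_le
    omega
  have hz : z = ∑ n ∈ Finset.range (k+1), c n * ((y:ℂ) * Complex.I)^n := by
    rw [hzdef, aeval_def, ← Polynomial.eval_map, ← hq,
      show ((x:ℂ) + (y:ℂ)*Complex.I) = ((y:ℂ)*Complex.I) + (x:ℂ) by ring,
      ← Polynomial.taylor_eval,
      Polynomial.eval_eq_sum_range' (by rw [Polynomial.natDegree_taylor]; exact hqdeg)]
    refine Finset.sum_congr rfl fun n _ => ?_
    rw [hq, taylor_coeff_eval]
  -- polynomials A and B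
  set A : ℂ[X] := ∑ n ∈ Finset.range (k+1), Polynomial.C (c n) * X^n with hA
  set B : ℂ[X] := ∑ n ∈ Finset.range (k+1), Polynomial.C ((-1)^n * c n) * X^n with hB
  have hAcoeff : ∀ j, A.coeff j = c j := by
    intro j
    rw [hA, Polynomial.finset_sum_coeff]
    simp only [Polynomial.coeff_C_mul, Polynomial.coeff_X_pow, mul_ite, mul_one, mul_zero]
    rw [Finset.sum_ite_eq (Finset.range (k+1)) j c]
    by_cases hj : j < k + 1
    · simp [hj]
    · simp [hj, hc0 j (by omega)]
  have hBcoeff : ∀ j, B.coeff j = (-1)^j * c j := by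
    intro j
    rw [hB, Polynomial.finset_sum_coeff]
    simp only [Polynomial.coeff_C_mul, Polynomial.coeff_X_pow, mul_ite, mul_one, mul_zero]
    rw [Finset.sum_ite_eq (Finset.range (k+1)) j (fun n => (-1:ℂ)^n * c n)]
    by_cases hj : j < k + 1
    · simp [hj]
    · simp [hj, hc0 j (by omega)]
  have hAeval : ∀ w : ℂ, A.eval w = ∑ n ∈ Finset.range (k+1), c n * w^n := by
    intro w; rw [hA, Polynomial.eval_finset_sum]; simp
  have hBeval : ∀ w : ℂ, B.eval w = ∑ n ∈ Finset.range (k+1), (-1)^n * c n * w^n := by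
    intro w; rw [hB, Polynomial.eval_finset_sum]; simp [mul_assoc]
  have hdegA : A.natDegree ≤ k := by
    rw [Polynomial.natDegree_le_iff_coeff_eq_zero]
    intro m hm; rw [hAcoeff]; exact hc0 m hm
  have hdegB : B.natDegree ≤ k := by
    rw [Polynomial.natDegree_le_iff_coeff_eq_zero]
    intro m hm; rw [hBcoeff, hc0 m hm]; ring
  -- conjugate
  have hzc : (starRingEnd ℂ) z = B.eval ((y:ℂ) * Complex.I) := by
    rw [hz, map_sum, hBeval]
    refine Finset.sum_congr rfl fun n _ => ?_
    rw [map_mul, map_pow, map_mul]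
    have hcc : (starRingEnd ℂ) (c n) = c n := by
      simp [hcdef, map_div₀]
    rw [hcc, Complex.conj_ofReal, Complex.conj_I]
    rw [show ((y:ℂ) * (-Complex.I)) = -((y:ℂ) * Complex.I) by ring, neg_pow]
    ring
  -- product expansion
  have hprod : z * (starRingEnd ℂ) z
      = ∑ s ∈ Finset.range (2*k+1),
          (∑ j ∈ Finset.range (s+1), c j * ((-1)^(s-j) * c (s-j))) * ((y:ℂ) * Complex.I)^s := by
    rw [hzc, hz, ← hAeval, ← Polynomial.eval_mul]
    have hdm : (A*B).natDegree < 2*k+1 := by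
      have := Polynomial.natDegree_mul_le (p := A) (q := B)
      omega
    rw [Polynomial.eval_eq_sum_range' hdm]
    refine Finset.sum_congr rfl fun s _ => ?_
    rw [Polynomial.coeff_mul, Finset.Nat.sum_antidiagonal_eq_sum_range_succ_mk]
    congr 1
    refine Finset.sum_congr rfl fun j _ => ?_
    rw [hAcoeff, hBcoeff]
  -- assemble
  apply Complex.ofReal_inj.mp
  have habs : ((‖z‖ ^ 2 : ℝ) : ℂ) = z * (starRingEnd ℂ) z := by
    rw [Complex.sq_norm, Complex.mul_conj]
  rw [habs, hprod]
  -- drop odd top term and pair up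
  rw [show 2*k+1 = 2*k+1 from rfl]
  have hstep : ∑ s ∈ Finset.range (2*k+1),
      (∑ j ∈ Finset.range (s+1), c j * ((-1)^(s-j) * c (s-j))) * ((y:ℂ) * Complex.I)^s
      = ∑ i ∈ Finset.range (k+1),
          (∑ j ∈ Finset.range (2*i+1), c j * ((-1)^(2*i-j) * c (2*i-j))) * ((y:ℂ) * Complex.I)^(2*i) := by
    have hext : ∑ s ∈ Finset.range (2*(k+1)),
        (∑ j ∈ Finset.range (s+1), c j * ((-1)^(s-j) * c (s-j))) * ((y:ℂ) * Complex.I)^s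
        = ∑ s ∈ Finset.range (2*k+1),
        (∑ j ∈ Finset.range (s+1), c j * ((-1)^(s-j) * c (s-j))) * ((y:ℂ) * Complex.I)^s := by
      rw [show 2*(k+1) = (2*k+1)+1 by omega, Finset.sum_range_succ,
        odd_sum_vanish c (s := 2*k+1) ⟨k, by omega⟩, zero_mul, add_zero]
    rw [← hext, sum_range_even_odd]
    refine Finset.sum_congr rfl fun i _ => ?_
    rw [odd_sum_vanish c (s := 2*i+1) ⟨i, by omega⟩, zero_mul, add_zero]
  rw [hstep]
  push_cast
  refine Finset.sum_congr rfl fun i _ => ?_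
  have hI : ((y:ℂ) * Complex.I)^(2*i) = (-1)^i * ((y:ℂ))^(2*i) := by
    have h2 : (Complex.I)^(2*i) = (-1)^i := by rw [pow_mul, Complex.I_sq]
    rw [mul_pow, h2]; ring
  rw [hI, Finset.sum_mul, Finset.sum_mul, Finset.sum_div]
  refine Finset.sum_congr rfl fun j hj => ?_
  have hj2 : j ≤ 2*i := by simp [Nat.lt_succ_iff] at hj; omega
  have hsign : ((-1:ℂ))^(2*i-j) = ((-1:ℂ))^j := by
    rcases Nat.even_or_odd j with he | ho
    · have h1 : Even (2*i - j) := (Nat.even_sub hj2).mpr (iff_of_true (even_two_mul i) he)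
      rw [h1.neg_one_pow, he.neg_one_pow]
    · have h1 : Odd (2*i - j) := Nat.Even.sub_odd hj2 (even_two_mul i) ho
      rw [h1.neg_one_pow, ho.neg_one_pow]
  have hfact : ((2*i).factorial : ℂ)
      = ((2*i).choose j : ℂ) * (j.factorial : ℂ) * ((2*i - j).factorial : ℂ) := by
    exact_mod_cast (Nat.choose_mul_factorial_mul_factorial hj2).symm
  have hne1 : (j.factorial : ℂ) ≠ 0 := Nat.cast_ne_zero.mpr j.factorial_ne_zero
  have hne2 : ((2*i - j).factorial : ℂ) ≠ 0 := Nat.cast_ne_zero.mpr (2*i-j).factorial_ne_zero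
  have hne3 : ((2*i).choose j : ℂ) ≠ 0 := Nat.cast_ne_zero.mpr (Nat.choose_pos hj2).ne'
  simp only [hcdef, ha]
  rw [hsign, hfact]
  field_simp
  ring
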